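/- (Singular points in case D₆⁺) Let a, b, c be real numbers with c > 0, b² − 4ac < 0, and b + 2c < 0. Then a > c > 0, b < 0, and b + 2a > 0; and the Hamiltonian vector field X_H(x,y) = (2y(b·x² + 2c·y² − 1), −2x(1 + 2a·x² + b·y²)) vanishes at a point (x,y) ∈ ℝ² if and only if (x,y) is one of the following seven points: (0,0); (0, ±1/√(2c)); or (ε₁·√((b+2c)/(b²−4ac)), ε₂·√((b+2a)/(4ac−b²))) with ε₁, ε₂ ∈ {+1, −1}. Moreover H(0,0) = 0, H(0, ±1/√(2c)) = −1/(4c), and H takes the value (a+b+c)/(b²−4ac) at each of the last four points. -/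

import Mathlib

/-- The Hamiltonian H(x,y) = x² − y² + a·x⁴ + c·y⁴ + b·x²·y². -/
noncomputable def Hfun (a b c x y : ℝ) : ℝ :=
  x ^ 2 - y ^ 2 + a * x ^ 4 + c * y ^ 4 + b * x ^ 2 * y ^ 2

theorem stmt8 (a b c : ℝ) (hc : 0 < c) (hD : b ^ 2 - 4 * a * c < 0) (hb2c : b + 2 * c < 0) :
    (c < a ∧ 0 < c ∧ b < 0 ∧ 0 < b + 2 * a) ∧
    (∀ x y : ℝ,
      (2 * y * (b * x ^ 2 + 2 * c * y ^ 2 - 1) = 0 ∧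
       -(2 * x) * (1 + 2 * a * x ^ 2 + b * y ^ 2) = 0) ↔
      ((x = 0 ∧ y = 0) ∨
       (x = 0 ∧ y = 1 / Real.sqrt (2 * c)) ∨
       (x = 0 ∧ y = -(1 / Real.sqrt (2 * c))) ∨
       (∃ ε₁ ε₂ : ℝ, (ε₁ = 1 ∨ ε₁ = -1) ∧ (ε₂ = 1 ∨ ε₂ = -1) ∧
          x = ε₁ * Real.sqrt ((b + 2 * c) / (b ^ 2 - 4 * a * c)) ∧
          y = ε₂ * Real.sqrt ((b + 2 * a) / (4 * a * c - b ^ 2))))) ∧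
    Hfun a b c 0 0 = 0 ∧
    Hfun a b c 0 (1 / Real.sqrt (2 * c)) = -1 / (4 * c) ∧
    Hfun a b c 0 (-(1 / Real.sqrt (2 * c))) = -1 / (4 * c) ∧
    (∀ ε₁ ε₂ : ℝ, (ε₁ = 1 ∨ ε₁ = -1) → (ε₂ = 1 ∨ ε₂ = -1) →
      Hfun a b c (ε₁ * Real.sqrt ((b + 2 * c) / (b ^ 2 - 4 * a * c)))
          (ε₂ * Real.sqrt ((b + 2 * a) / (4 * a * c - b ^ 2)))
        = (a + b + c) / (b ^ 2 - 4 * a * c)) := by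
  have hb : b < 0 := by linarith
  have hca : c < a := by
    nlinarith [mul_pos (by linarith : (0:ℝ) < -b - 2*c) (by linarith : (0:ℝ) < -b + 2*c)]
  have hb2a : 0 < b + 2 * a := by
    nlinarith [mul_pos_of_neg_of_neg hb hb2c]
  have hDne : b ^ 2 - 4 * a * c ≠ 0 := ne_of_lt hD
  have hD' : (0:ℝ) < 4 * a * c - b ^ 2 := by linarith
  have hD'ne : 4 * a * c - b ^ 2 ≠ 0 := ne_of_gt hD'
  have hXpos : 0 < (b + 2 * c) / (b ^ 2 - 4 * a * c) := div_pos_of_neg_of_neg hb2c hD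
  have hYpos : 0 < (b + 2 * a) / (4 * a * c - b ^ 2) := div_pos hb2a hD'
  set q := Real.sqrt ((b + 2 * c) / (b ^ 2 - 4 * a * c)) with hq
  set r := Real.sqrt ((b + 2 * a) / (4 * a * c - b ^ 2)) with hr
  have hq2 : q ^ 2 = (b + 2 * c) / (b ^ 2 - 4 * a * c) := Real.sq_sqrt hXpos.le
  have hr2 : r ^ 2 = (b + 2 * a) / (4 * a * c - b ^ 2) := Real.sq_sqrt hYpos.le
  have hs2 : (1 / Real.sqrt (2 * c)) ^ 2 = 1 / (2 * c) := by
    rw [div_pow, one_pow, Real.sq_sqrt (by linarith : (0:ℝ) ≤ 2 * c)]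
  refine ⟨⟨hca, hc, hb, hb2a⟩, ?_, ?_, ?_, ?_, ?_⟩
  · intro x y
    constructor
    · rintro ⟨h1, h2⟩
      have h1' : y = 0 ∨ b * x ^ 2 + 2 * c * y ^ 2 - 1 = 0 := by
        rcases mul_eq_zero.mp h1 with h | h
        · left; linarith
        · right; exact h
      have h2' : x = 0 ∨ 1 + 2 * a * x ^ 2 + b * y ^ 2 = 0 := by
        rcases mul_eq_zero.mp h2 with h | h
        · left; linarith
        · right; exact h
      rcases h2' with rfl | hE2
      · rcases h1' with rfl | hE1
        · exact Or.inl ⟨rfl, rfl⟩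
        · have hy2 : y ^ 2 = 1 / (2 * c) := by
            field_simp
            linear_combination hE1
          have hfac : (y - 1 / Real.sqrt (2 * c)) * (y + 1 / Real.sqrt (2 * c)) = 0 := by
            linear_combination hy2 - hs2
          rcases mul_eq_zero.mp hfac with h | h
          · exact Or.inr (Or.inl ⟨rfl, by linarith⟩)
          · exact Or.inr (Or.inr (Or.inl ⟨rfl, by linarith⟩))
      · rcases h1' with rfl | hE1
        · exfalso; nlinarith [sq_nonneg x]
        · have hx2 : x ^ 2 = q ^ 2 := by
            rw [hq2, eq_div_iff hDne]
            linear_combination b * hE1 - 2 * c * hE2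
          have hy2 : y ^ 2 = r ^ 2 := by
            rw [hr2, eq_div_iff hD'ne]
            linear_combination 2 * a * hE1 - b * hE2
          have hxf : (x - q) * (x + q) = 0 := by linear_combination hx2
          have hyf : (y - r) * (y + r) = 0 := by linear_combination hy2
          refine Or.inr (Or.inr (Or.inr ?_))
          rcases mul_eq_zero.mp hxf with hx | hx <;> rcases mul_eq_zero.mp hyf with hy | hy
          · exact ⟨1, 1, Or.inl rfl, Or.inl rfl, by linarith, by linarith⟩
          · exact ⟨1, -1, Or.inl rfl, Or.inr rfl, by linarith, by linarith⟩
          · exact ⟨-1, 1, Or.inr rfl, Or.inl rfl, by linarith, by linarith⟩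
          · exact ⟨-1, -1, Or.inr rfl, Or.inr rfl, by linarith, by linarith⟩
    · rintro (⟨rfl, rfl⟩ | ⟨rfl, rfl⟩ | ⟨rfl, rfl⟩ | ⟨ε₁, ε₂, he1, he2, hx, hy⟩)
      · norm_num
      · constructor
        · rw [hs2]
          have h0 : b * (0:ℝ) ^ 2 + 2 * c * (1 / (2 * c)) - 1 = 0 := by field_simp; ring
          rw [h0, mul_zero]
        · ring
      · constructor
        · rw [show (-(1 / Real.sqrt (2 * c))) ^ 2 = (1 / Real.sqrt (2 * c)) ^ 2 by ring, hs2]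
          have h0 : b * (0:ℝ) ^ 2 + 2 * c * (1 / (2 * c)) - 1 = 0 := by field_simp; ring
          rw [h0, mul_zero]
        · ring
      · have he1s : ε₁ ^ 2 = 1 := by rcases he1 with rfl | rfl <;> norm_num
        have he2s : ε₂ ^ 2 = 1 := by rcases he2 with rfl | rfl <;> norm_num
        have hx2 : x ^ 2 = q ^ 2 := by rw [hx, mul_pow, he1s, one_mul]
        have hy2 : y ^ 2 = r ^ 2 := by rw [hy, mul_pow, he2s, one_mul]
        constructor
        · have key : b * x ^ 2 + 2 * c * y ^ 2 - 1 = 0 := by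
            rw [hx2, hy2, hq2, hr2]
            rw [show 4 * a * c - b ^ 2 = -(b ^ 2 - 4 * a * c) by ring, div_neg]
            linear_combination mul_inv_cancel₀ hDne
          rw [key, mul_zero]
        · have key : 1 + 2 * a * x ^ 2 + b * y ^ 2 = 0 := by
            rw [hx2, hy2, hq2, hr2]
            rw [show 4 * a * c - b ^ 2 = -(b ^ 2 - 4 * a * c) by ring, div_neg]
            linear_combination -(mul_inv_cancel₀ hDne)
          rw [key, mul_zero]
  · simp [Hfun]
  · simp only [Hfun]
    rw [show (1 / Real.sqrt (2 * c)) ^ 4 = ((1 / Real.sqrt (2 * c)) ^ 2) ^ 2 by ring, hs2]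
    field_simp
    ring
  · simp only [Hfun]
    rw [show (-(1 / Real.sqrt (2 * c))) ^ 4 = ((1 / Real.sqrt (2 * c)) ^ 2) ^ 2 by ring,
      show (-(1 / Real.sqrt (2 * c))) ^ 2 = (1 / Real.sqrt (2 * c)) ^ 2 by ring, hs2]
    field_simp
    ring
  · intro ε₁ ε₂ he1 he2
    have he1s : ε₁ ^ 2 = 1 := by rcases he1 with rfl | rfl <;> norm_num
    have he2s : ε₂ ^ 2 = 1 := by rcases he2 with rfl | rfl <;> norm_num
    simp only [Hfun]
    rw [show (ε₁ * q) ^ 4 = ((ε₁ * q) ^ 2) ^ 2 by ring,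
      show (ε₂ * r) ^ 4 = ((ε₂ * r) ^ 2) ^ 2 by ring,
      show (ε₁ * q) ^ 2 = ε₁ ^ 2 * q ^ 2 by ring,
      show (ε₂ * r) ^ 2 = ε₂ ^ 2 * r ^ 2 by ring,
      he1s, he2s, one_mul, one_mul, hq2, hr2]
    rw [show 4 * a * c - b ^ 2 = -(b ^ 2 - 4 * a * c) by ring, div_neg]
    have hN : b ^ 2 - c * 4 * a ≠ 0 := by intro h; apply hDne; linear_combination h
    field_simp
    ring
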